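/- Let r ≥ 2. If G is a bipartite graph containing no induced subgraph isomorphic to K_{1,r}^+ (the star K_{1,r} with one edge subdivided), then ivc(G) ≤ (r−1)·vc(G)². -/
import Mathlib


open SimpleGraph

/-- `S` is an independent set of `G`. -/
def IsIS {V : Type*} (G : SimpleGraph V) (S : Set V) : Prop :=
  S.Pairwise fun u v => ¬ G.Adj u v

/-- `G` contains no induced subgraph isomorphic to `H`. -/
def HFree {W V : Type*} (H : SimpleGraph W) (G : SimpleGraph V) : Prop :=
  IsEmpty (H ↪g G)

/-- `G` is bipartite: the vertex set splits into two independent sets. -/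
def IsBip {V : Type*} (G : SimpleGraph V) : Prop :=
  ∃ X : Set V, IsIS G X ∧ IsIS G Xᶜ

/-- `S` is a vertex cover of `G`. -/
def IsVC {V : Type*} (G : SimpleGraph V) (S : Finset V) : Prop :=
  ∀ ⦃u v⦄, G.Adj u v → u ∈ S ∨ v ∈ S

/-- minimum size of a vertex cover. -/
noncomputable def vc {V : Type*} (G : SimpleGraph V) : ℕ :=
  sInf {n | ∃ S : Finset V, IsVC G S ∧ S.card = n}

/-- minimum size of an independent vertex cover. -/
noncomputable def ivc {V : Type*} (G : SimpleGraph V) : ℕ :=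
  sInf {n | ∃ S : Finset V, IsVC G S ∧ IsIS G ↑S ∧ S.card = n}

/-- `K_{1,r}^+`: the star `K_{1,r}` with one edge subdivided.
Vertex `Sum.inl 0` is the centre, `Sum.inl 1` the subdivision vertex,
`Sum.inl 2` the far endpoint, and `Sum.inr i` the remaining `r - 1` leaves. -/
def starSubdiv (r : ℕ) : SimpleGraph (Fin 3 ⊕ Fin (r - 1)) :=
  SimpleGraph.fromRel fun u v =>
    (u = Sum.inl 0 ∧ v = Sum.inl 1) ∨ (u = Sum.inl 1 ∧ v = Sum.inl 2) ∨
      (∃ i : Fin (r - 1), u = Sum.inl 0 ∧ v = Sum.inr i)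

section AuxiliaryLemmas

attribute [local instance] Classical.propDecidable

lemma aux_embed {V : Type*} {G : SimpleGraph V} {r : ℕ}
    (hfree : HFree (starSubdiv r) G) (x0 x1 x2 : V) (l : Fin (r-1) → V)
    (hinj : Function.Injective l)
    (a01 : G.Adj x0 x1) (a12 : G.Adj x1 x2) (a0l : ∀ i, G.Adj x0 (l i))
    (n02 : ¬ G.Adj x0 x2) (n1l : ∀ i, ¬ G.Adj x1 (l i)) (n2l : ∀ i, ¬ G.Adj x2 (l i))
    (nll : ∀ i j, i ≠ j → ¬ G.Adj (l i) (l j))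
    (h02 : x0 ≠ x2) (hl0 : ∀ i, l i ≠ x0) (hl1 : ∀ i, l i ≠ x1) (hl2 : ∀ i, l i ≠ x2) :
    False := by
  have h01 : x0 ≠ x1 := a01.ne
  have h12 : x1 ≠ x2 := a12.ne
  let g : Fin 3 → V := fun j => if j.val = 0 then x0 else if j.val = 1 then x1 else x2
  let f : Fin 3 ⊕ Fin (r-1) → V := Sum.elim g l
  have hfinj : Function.Injective f := by
    have hgval : ∀ b : Fin 3, g b = x0 ∨ g b = x1 ∨ g b = x2 := by
      intro b; fin_cases b
      · exact Or.inl rfl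
      · exact Or.inr (Or.inl rfl)
      · exact Or.inr (Or.inr rfl)
    rintro (a | i) (b | j) hab
    · simp only [f, Sum.elim_inl] at hab
      congr 1
      fin_cases a <;> fin_cases b <;> simp_all [g]
    · exfalso
      simp only [f, Sum.elim_inl, Sum.elim_inr] at hab
      rcases hgval a with h | h | h <;> rw [h] at hab
      · exact hl0 j hab.symm
      · exact hl1 j hab.symm
      · exact hl2 j hab.symm
    · exfalso
      simp only [f, Sum.elim_inl, Sum.elim_inr] at hab
      rcases hgval b with h | h | h <;> rw [h] at hab
      · exact hl0 i hab
      · exact hl1 i hab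
      · exact hl2 i hab
    · simp only [f, Sum.elim_inr] at hab
      exact congrArg Sum.inr (hinj hab)
  have key : ∀ a b, G.Adj (f a) (f b) ↔ (starSubdiv r).Adj a b := by
    rintro (a | i) (b | j)
    · fin_cases a <;> fin_cases b <;>
        simp only [f, g, Sum.elim_inl, starSubdiv, SimpleGraph.fromRel_adj] <;> simp
      · exact a01
      · exact n02
      · exact a01.symm
      · exact a12
      · exact fun h => n02 h.symm
      · exact a12.symm
    · fin_cases a <;>
        simp only [f, g, Sum.elim_inl, Sum.elim_inr, starSubdiv, SimpleGraph.fromRel_adj] <;> simp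
      · exact a0l j
      · exact n1l j
      · exact n2l j
    · fin_cases b <;>
        simp only [f, g, Sum.elim_inl, Sum.elim_inr, starSubdiv, SimpleGraph.fromRel_adj] <;> simp
      · exact (a0l i).symm
      · exact fun h => n1l i h.symm
      · exact fun h => n2l i h.symm
    · simp only [f, Sum.elim_inr, starSubdiv, SimpleGraph.fromRel_adj]
      simp only [reduceCtorEq, false_and, exists_false, or_self, and_false, iff_false]
      intro h
      rcases eq_or_ne i j with rfl | hne
      · exact G.irrefl h
      · exact nll i j hne h
  exact hfree.elim ⟨⟨f, hfinj⟩, key _ _⟩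

lemma oneside {V : Type*} {G : SimpleGraph V} {X : Set V} (hX : IsIS G X) (hXc : IsIS G Xᶜ)
    {u v : V} (h : G.Adj u v) : u ∈ X ↔ v ∉ X := by
  constructor
  · intro hu hv
    exact hX hu hv h.ne h
  · intro hv
    by_contra hu
    exact hXc hu hv h.ne h

lemma pick_inj {V : Type*} {D : Finset V} {n : ℕ} (h : n ≤ D.card) :
    ∃ f : Fin n → V, Function.Injective f ∧ ∀ i, f i ∈ D := by
  obtain ⟨t, htD, htc⟩ := Finset.exists_subset_card_eq h
  let e := t.equivFinOfCardEq htc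
  refine ⟨fun i => (e.symm i : V), ?_, fun i => htD (e.symm i).2⟩
  intro i j hij
  exact e.symm.injective (Subtype.ext hij)

lemma walk_parity {V : Type*} {G : SimpleGraph V} {X : Set V} (hX : IsIS G X)
    (hXc : IsIS G Xᶜ) : ∀ {u w : V} (p : G.Walk u w), Even p.length ↔ (u ∈ X ↔ w ∈ X) := by
  intro u w p
  induction p with
  | nil => simp
  | cons h q ih =>
    have h1 := oneside hX hXc h
    rw [SimpleGraph.Walk.length_cons, Nat.even_add_one, ih]
    tauto

lemma reach_mem {V : Type*} {G : SimpleGraph V} :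
    ∀ {u w : V} (p : G.Walk u w) (v : V), v ∈ p.support → G.Reachable u v := by
  intro u w p
  induction p with
  | nil =>
    intro v hv
    rw [SimpleGraph.Walk.support_nil, List.mem_singleton] at hv
    subst hv
    exact SimpleGraph.Reachable.refl _
  | cons h q ih =>
    intro v hv
    rw [SimpleGraph.Walk.support_cons, List.mem_cons] at hv
    rcases hv with rfl | hv
    · exact SimpleGraph.Reachable.refl _
    · exact (h.reachable).trans (ih v hv)

lemma hasNbr {V : Type*} {G : SimpleGraph V} {u w v : V} (h : G.Adj u w)
    (hc : G.connectedComponentMk v = G.connectedComponentMk u) : ∃ z, G.Adj v z := by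
  obtain ⟨p⟩ := SimpleGraph.ConnectedComponent.exact hc
  cases p with
  | nil => exact ⟨w, h⟩
  | cons h' _ => exact ⟨_, h'⟩

lemma path_len {V : Type*} {G : SimpleGraph V} {C : Finset V} (hC : IsVC G C) :
    ∀ {u w : V} (p : G.Walk u w), p.IsPath →
      p.length + (if u ∈ C then 1 else 0) ≤
        2 * (p.support.toFinset.filter (· ∈ C)).card := by
  intro u w p
  induction p with
  | @nil z =>
    intro _
    by_cases hz : z ∈ C <;>
      simp [SimpleGraph.Walk.support_nil, Finset.filter_singleton, hz]
  | @cons u v1 w h q ih =>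
    intro hp
    rw [SimpleGraph.Walk.cons_isPath_iff] at hp
    obtain ⟨hq, hus⟩ := hp
    have hIH := ih hq
    have hsup : (SimpleGraph.Walk.cons h q).support.toFinset
        = insert u q.support.toFinset := by
      simp [SimpleGraph.Walk.support_cons]
    rw [hsup, SimpleGraph.Walk.length_cons]
    by_cases hu : u ∈ C
    · rw [Finset.filter_insert]
      simp only [hu, if_true]
      rw [Finset.card_insert_of_notMem
          (fun hmem => hus (List.mem_toFinset.mp (Finset.mem_filter.mp hmem).1))]
      have h1 : q.length ≤ 2 * (q.support.toFinset.filter (· ∈ C)).card :=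
        le_trans (Nat.le_add_right _ _) hIH
      omega
    · rw [Finset.filter_insert]
      simp only [hu, if_false]
      have hv1 : v1 ∈ C := by
        rcases hC h with h' | h'
        · exact absurd h' hu
        · exact h'
      rw [if_pos hv1] at hIH
      omega

lemma sum_sq_le {α : Type*} (s : Finset α) (f : α → ℕ) :
    (∑ c ∈ s, f c ^ 2) ≤ (∑ c ∈ s, f c) ^ 2 := by
  rw [pow_two]
  calc (∑ c ∈ s, f c ^ 2) = ∑ c ∈ s, f c * f c := by
        apply Finset.sum_congr rfl; intro c _; rw [pow_two]
    _ ≤ ∑ c ∈ s, f c * (∑ d ∈ s, f d) :=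
        Finset.sum_le_sum (fun c hc =>
          Nat.mul_le_mul_left _ (Finset.single_le_sum (fun d _ => Nat.zero_le _) hc))
    _ = (∑ c ∈ s, f c) * (∑ d ∈ s, f d) := by rw [← Finset.sum_mul]

lemma walk_ind {V : Type*} {G : SimpleGraph V} {X : Set V} {C : Finset V} {r : ℕ}
    (hr : 2 ≤ r)
    (hX : IsIS G X) (hXc : IsIS G Xᶜ) (hC : IsVC G C) (hfree : HFree (starSubdiv r) G)
    {a0 y1 : V} (ha0X : a0 ∈ X) (ha0C : a0 ∈ C) (hy1 : G.Adj a0 y1) (hy1C : y1 ∉ C) :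
    ∀ n : ℕ, ∀ v : V, ∀ D : Finset V, v ∉ X →
      (∀ u ∈ D, G.Adj v u ∧ u ∈ X ∧ u ∉ C) →
      r + (r - 2) * n ≤ D.card →
      ∀ p : G.Walk v a0, p.length ≤ 2 * n + 1 → False := by
  have hXmem : ∀ {z : V}, z ∉ X → z ∈ Xᶜ := fun hz => hz
  have final : ∀ (v : V) (D : Finset V), v ∉ X →
      (∀ u ∈ D, G.Adj v u ∧ u ∈ X ∧ u ∉ C) → r ≤ D.card → G.Adj v a0 → False := by
    intro v D hv hD hcard hadj
    obtain ⟨f, hfinj, hfD⟩ := pick_inj (n := r - 1) (le_trans (by omega) hcard)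
    have hvC : v ∈ C := by
      obtain ⟨u, hu⟩ := Finset.card_pos.mp (lt_of_lt_of_le (by omega) hcard)
      rcases hC (hD u hu).1 with h | h
      · exact h
      · exact absurd h (hD u hu).2.2
    have hy1X : y1 ∉ X := (oneside hX hXc hy1).mp ha0X
    have hvy1 : v ≠ y1 := fun he => hy1C (he ▸ hvC)
    refine aux_embed hfree v a0 y1 f hfinj hadj hy1 (fun i => (hD _ (hfD i)).1)
      (fun hadj' => hXc (hXmem hv) (hXmem hy1X) hvy1 hadj')
      (fun i hadj' => hX ha0X (hD _ (hfD i)).2.1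
        (fun he => (hD _ (hfD i)).2.2 (he ▸ ha0C)) hadj')
      (fun i hadj' => by
        rcases hC hadj' with h | h
        · exact hy1C h
        · exact (hD _ (hfD i)).2.2 h)
      (fun i j hne hadj' => hX (hD _ (hfD i)).2.1 (hD _ (hfD j)).2.1
        (fun he => hne (hfinj he)) hadj')
      hvy1
      (fun i he => hv (he ▸ (hD _ (hfD i)).2.1))
      (fun i he => (hD _ (hfD i)).2.2 (by rw [he]; exact ha0C))
      (fun i he => hy1X (he ▸ (hD _ (hfD i)).2.1))
  intro n
  induction n with
  | zero =>
    intro v D hv hD hcard p hlen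
    cases p with
    | nil => exact hv ha0X
    | cons h q =>
      cases q with
      | nil => exact final v D hv hD (by omega) h
      | cons h2 q2 =>
        simp only [SimpleGraph.Walk.length_cons] at hlen
        omega
  | succ n ih =>
    intro v D hv hD hcard p hlen
    cases p with
    | nil => exact hv ha0X
    | @cons _ p1 _ h q =>
      cases q with
      | nil => exact final v D hv hD (le_trans (Nat.le_add_right r _) hcard) h
      | @cons _ p2 _ h2 q2 =>
        have hp1X : p1 ∈ X := by
          have := oneside hX hXc h; tauto
        have hp2X : p2 ∉ X := by
          have := oneside hX hXc h2; tauto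
        have hlen2 : q2.length ≤ 2 * n + 1 := by
          simp only [SimpleGraph.Walk.length_cons] at hlen
          omega
        rcases eq_or_ne p2 v with rfl | hp2v
        · refine ih _ D hv hD (le_trans ?_ hcard) q2 hlen2
          have h3 : (r - 2) * (n + 1) = (r - 2) * n + (r - 2) := by ring
          omega
        · set D' := D.filter (fun u => G.Adj p2 u) with hD'
          have hD'sub : D' ⊆ D := Finset.filter_subset _ _
          have nvp2 : ¬ G.Adj v p2 :=
            fun hadj' => hXc (hXmem hv) (hXmem hp2X) (Ne.symm hp2v) hadj'
          by_cases hsmall : (D \ D').card ≤ r - 2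
          · have hcard' : r + (r - 2) * n ≤ D'.card := by
              have h1 : (D \ D').card = D.card - D'.card := by
                rw [Finset.card_sdiff_of_subset hD'sub]
              have h2 := Finset.card_le_card hD'sub
              have h3 : (r - 2) * (n + 1) = (r - 2) * n + (r - 2) := by ring
              omega
            refine ih p2 D' hp2X ?_ hcard' q2 hlen2
            intro u hu
            rw [hD', Finset.mem_filter] at hu
            exact ⟨hu.2, (hD u hu.1).2.1, (hD u hu.1).2.2⟩
          · push_neg at hsmall
            obtain ⟨f, hfinj, hfD⟩ := pick_inj (n := r - 1)
              (le_trans (by omega) hsmall)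
            have hfprops : ∀ i, f i ∈ D ∧ ¬ G.Adj p2 (f i) := by
              intro i
              have hm := hfD i
              rw [Finset.mem_sdiff] at hm
              refine ⟨hm.1, fun hadj' => hm.2 ?_⟩
              rw [hD', Finset.mem_filter]
              exact ⟨hm.1, hadj'⟩
            by_cases hD'e : D'.Nonempty
            · obtain ⟨u0, hu0⟩ := hD'e
              have hu0D := hD'sub hu0
              have hu0adj : G.Adj p2 u0 := (Finset.mem_filter.mp hu0).2
              refine aux_embed hfree v u0 p2 f hfinj (hD u0 hu0D).1 hu0adj.symm
                (fun i => (hD _ (hfprops i).1).1)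
                nvp2
                (fun i hadj' => hX (hD u0 hu0D).2.1 (hD _ (hfprops i).1).2.1
                  (fun he => (hfprops i).2 (he ▸ hu0adj)) hadj')
                (fun i => (hfprops i).2)
                (fun i j hne hadj' => hX (hD _ (hfprops i).1).2.1 (hD _ (hfprops j).1).2.1
                  (fun he => hne (hfinj he)) hadj')
                (fun he => hp2v he.symm)
                (fun i he => hv (he ▸ (hD _ (hfprops i).1).2.1))
                (fun i he => (hfprops i).2 (by rw [he]; exact hu0adj))
                (fun i he => hp2X (he ▸ (hD _ (hfprops i).1).2.1))
            · rw [Finset.not_nonempty_iff_eq_empty] at hD'e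
              have np2D : ∀ u ∈ D, ¬ G.Adj p2 u := by
                intro u hu hadj'
                have hmem : u ∈ D' := by
                  rw [hD', Finset.mem_filter]; exact ⟨hu, hadj'⟩
                rw [hD'e] at hmem
                exact absurd hmem (Finset.notMem_empty u)
              have hDcard : r ≤ D.card := le_trans (Nat.le_add_right r _) hcard
              have herase : r - 1 ≤ (D.erase p1).card := by
                rcases em (p1 ∈ D) with hp | hp
                · rw [Finset.card_erase_of_mem hp]; omega
                · rw [Finset.erase_eq_of_notMem hp]; omega
              obtain ⟨f, hfinj, hfD⟩ := pick_inj (n := r - 1) herase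
              have hfm : ∀ i, f i ≠ p1 ∧ f i ∈ D := by
                intro i
                have := hfD i
                rw [Finset.mem_erase] at this
                exact this
              refine aux_embed hfree v p1 p2 f hfinj h h2
                (fun i => (hD _ (hfm i).2).1)
                nvp2
                (fun i hadj' => hX hp1X (hD _ (hfm i).2).2.1
                  (fun he => (hfm i).1 he.symm) hadj')
                (fun i hadj' => np2D _ (hfm i).2 hadj')
                (fun i j hne hadj' => hX (hD _ (hfm i).2).2.1 (hD _ (hfm j).2).2.1
                  (fun he => hne (hfinj he)) hadj')
                (fun he => hp2v he.symm)
                (fun i he => hv (he ▸ (hD _ (hfm i).2).2.1))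
                (fun i => (hfm i).1)
                (fun i he => hp2X (he ▸ (hD _ (hfm i).2).2.1))

lemma sideBound {V : Type*} [Fintype V] {G : SimpleGraph V} {X : Set V} {C : Finset V}
    {r : ℕ} (hr : 2 ≤ r)
    (hX : IsIS G X) (hXc : IsIS G Xᶜ) (hC : IsVC G C)
    (c : G.ConnectedComponent)
    (hedge : ∃ u w, G.Adj u w ∧ G.connectedComponentMk u = c)
    (hsmall : ∀ b ∈ C, b ∉ X → G.connectedComponentMk b = c →
      (Finset.univ.filter (fun u => G.Adj b u ∧ u ∉ C)).card ≤
        (r - 1) * (C.filter (fun z => G.connectedComponentMk z = c)).card - 1) :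
    (Finset.univ.filter (fun v : V => v ∈ X ∧ G.connectedComponentMk v = c)).card ≤
      (r - 1) * (C.filter (fun z => G.connectedComponentMk z = c)).card ^ 2 := by
  set k := (C.filter (fun z => G.connectedComponentMk z = c)).card with hk
  set A := C.filter (fun z => z ∈ X ∧ G.connectedComponentMk z = c) with hA
  set B := C.filter (fun z => z ∉ X ∧ G.connectedComponentMk z = c) with hB
  have hAB : A.card + B.card = k := by
    rw [hk, hA, hB, ← Finset.card_union_of_disjoint ?_]
    · congr 1
      ext z
      simp only [Finset.mem_union, Finset.mem_filter]
      tauto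
    · rw [Finset.disjoint_left]
      intro z hz1 hz2
      rw [Finset.mem_filter] at hz1 hz2
      exact hz2.2.1 hz1.2.1
  have hk1 : 1 ≤ k := by
    obtain ⟨u, w, huw, hu⟩ := hedge
    rcases hC huw with h | h
    · refine Finset.card_pos.mpr ⟨u, ?_⟩
      rw [Finset.mem_filter]; exact ⟨h, hu⟩
    · refine Finset.card_pos.mpr ⟨w, ?_⟩
      rw [Finset.mem_filter]
      exact ⟨h, (SimpleGraph.ConnectedComponent.sound huw.symm.reachable).trans hu⟩
  have hsub : Finset.univ.filter (fun v : V => v ∈ X ∧ G.connectedComponentMk v = c) ⊆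
      A ∪ B.biUnion (fun b => Finset.univ.filter (fun u => G.Adj b u ∧ u ∉ C)) := by
    intro v hv
    rw [Finset.mem_filter] at hv
    obtain ⟨-, hvX, hvc⟩ := hv
    by_cases hvC : v ∈ C
    · exact Finset.mem_union_left _ (by rw [hA, Finset.mem_filter]; exact ⟨hvC, hvX, hvc⟩)
    · obtain ⟨u0, w0, h0, hc0⟩ := hedge
      obtain ⟨z, hz⟩ := hasNbr h0 (hvc.trans hc0.symm)
      have hzC : z ∈ C := by
        rcases hC hz with h | h
        · exact absurd h hvC
        · exact h
      have hzX : z ∉ X := by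
        have := oneside hX hXc hz; tauto
      have hzc : G.connectedComponentMk z = c :=
        (SimpleGraph.ConnectedComponent.sound hz.symm.reachable).trans hvc
      refine Finset.mem_union_right _ (Finset.mem_biUnion.mpr ⟨z, ?_, ?_⟩)
      · rw [hB, Finset.mem_filter]; exact ⟨hzC, hzX, hzc⟩
      · rw [Finset.mem_filter]; exact ⟨Finset.mem_univ _, hz.symm, hvC⟩
  have hm1 : 1 ≤ (r - 1) * k := by
    have : 1 ≤ r - 1 := by omega
    calc 1 = 1 * 1 := rfl
      _ ≤ (r - 1) * k := Nat.mul_le_mul this hk1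
  calc (Finset.univ.filter (fun v : V => v ∈ X ∧ G.connectedComponentMk v = c)).card
      ≤ (A ∪ B.biUnion (fun b => Finset.univ.filter (fun u => G.Adj b u ∧ u ∉ C))).card :=
        Finset.card_le_card hsub
    _ ≤ A.card + (B.biUnion (fun b => Finset.univ.filter (fun u => G.Adj b u ∧ u ∉ C))).card :=
        Finset.card_union_le _ _
    _ ≤ A.card + ∑ b ∈ B, (Finset.univ.filter (fun u => G.Adj b u ∧ u ∉ C)).card :=
        Nat.add_le_add_left (Finset.card_biUnion_le) _
    _ ≤ A.card + ∑ _b ∈ B, ((r - 1) * k - 1) := by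
        refine Nat.add_le_add_left (Finset.sum_le_sum ?_) _
        intro b hb
        rw [hB, Finset.mem_filter] at hb
        exact hsmall b hb.1 hb.2.1 hb.2.2
    _ = A.card + B.card * ((r - 1) * k - 1) := by rw [Finset.sum_const, smul_eq_mul]
    _ ≤ A.card * ((r - 1) * k) + B.card * ((r - 1) * k) :=
        Nat.add_le_add (Nat.le_mul_of_pos_right _ (by omega))
          (Nat.mul_le_mul_left _ (Nat.sub_le _ _))
    _ = (r - 1) * k ^ 2 := by
        rw [← Nat.add_mul, hAB]; ring

lemma k_pos {V : Type*} [Fintype V] {G : SimpleGraph V} {C : Finset V} (hC : IsVC G C)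
    {c : G.ConnectedComponent}
    (hedge : ∃ u w, G.Adj u w ∧ G.connectedComponentMk u = c) :
    1 ≤ (C.filter (fun z => G.connectedComponentMk z = c)).card := by
  obtain ⟨u, w, huw, hu⟩ := hedge
  rcases hC huw with h | h
  · exact Finset.card_pos.mpr ⟨u, by rw [Finset.mem_filter]; exact ⟨h, hu⟩⟩
  · refine Finset.card_pos.mpr ⟨w, ?_⟩
    rw [Finset.mem_filter]
    exact ⟨h, (SimpleGraph.ConnectedComponent.sound huw.symm.reachable).trans hu⟩

lemma keyLemma {V : Type*} [Fintype V] {G : SimpleGraph V} {X : Set V} {C : Finset V}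
    {r : ℕ} (hr : 2 ≤ r)
    (hX : IsIS G X) (hXc : IsIS G Xᶜ) (hC : IsVC G C) (hfree : HFree (starSubdiv r) G)
    (c : G.ConnectedComponent)
    (hedge : ∃ u w, G.Adj u w ∧ G.connectedComponentMk u = c) :
    (Finset.univ.filter (fun v : V => v ∈ X ∧ G.connectedComponentMk v = c)).card ≤
      (r - 1) * (C.filter (fun z => G.connectedComponentMk z = c)).card ^ 2 ∨
    (Finset.univ.filter (fun v : V => v ∉ X ∧ G.connectedComponentMk v = c)).card ≤
      (r - 1) * (C.filter (fun z => G.connectedComponentMk z = c)).card ^ 2 := by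
  set kc := (C.filter (fun z => G.connectedComponentMk z = c)).card with hkc
  have hk1 : 1 ≤ kc := k_pos hC hedge
  have hm1 : 1 ≤ (r - 1) * kc := by
    have h1 : 1 ≤ r - 1 := by omega
    calc 1 = 1 * 1 := rfl
      _ ≤ (r - 1) * kc := Nat.mul_le_mul h1 hk1
  by_cases hbigB : ∃ b ∈ C, b ∉ X ∧ G.connectedComponentMk b = c ∧
      (r - 1) * kc ≤ (Finset.univ.filter (fun u => G.Adj b u ∧ u ∉ C)).card
  case neg =>
    left
    refine sideBound hr hX hXc hC c hedge ?_
    intro b hb hbX hbc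
    have h2 : ¬ ((r - 1) * kc ≤ (Finset.univ.filter (fun u => G.Adj b u ∧ u ∉ C)).card) :=
      fun h => hbigB ⟨b, hb, hbX, hbc, h⟩
    rw [← hkc]
    omega
  case pos =>
  by_cases hbigA : ∃ a ∈ C, a ∈ X ∧ G.connectedComponentMk a = c ∧
      (r - 1) * kc ≤ (Finset.univ.filter (fun u => G.Adj a u ∧ u ∉ C)).card
  case neg =>
    right
    have hXc2 : IsIS G Xᶜᶜ := by rwa [compl_compl]
    have hres := sideBound hr hXc hXc2 hC c hedge ?hsmall
    case hsmall =>
      intro b hb hbX hbc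
      have hbX2 : b ∈ X := by
        by_contra hcon
        exact hbX hcon
      have h2 : ¬ ((r - 1) * kc ≤ (Finset.univ.filter (fun u => G.Adj b u ∧ u ∉ C)).card) :=
        fun h => hbigA ⟨b, hb, hbX2, hbc, h⟩
      rw [← hkc]
      omega
    refine le_trans (le_of_eq ?_) hres
    congr 1
    ext x
    simp [Set.mem_compl_iff]
  case pos =>
  exfalso
  obtain ⟨b0, hb0C, hb0X, hb0c, hb0big⟩ := hbigB
  obtain ⟨a0, ha0C, ha0X, ha0c, ha0big⟩ := hbigA
  have hk2 : 2 ≤ kc := by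
    have hne : a0 ≠ b0 := fun he => hb0X (he ▸ ha0X)
    calc 2 = ({a0, b0} : Finset V).card := (Finset.card_pair hne).symm
      _ ≤ kc := by
        refine Finset.card_le_card ?_
        intro z hz
        rw [Finset.mem_insert, Finset.mem_singleton] at hz
        rw [Finset.mem_filter]
        rcases hz with rfl | rfl
        · exact ⟨ha0C, ha0c⟩
        · exact ⟨hb0C, hb0c⟩
  obtain ⟨y1, hy1⟩ := Finset.card_pos.mp (lt_of_lt_of_le hm1 ha0big)
  rw [Finset.mem_filter] at hy1
  obtain ⟨-, hy1adj, hy1C⟩ := hy1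
  set D := Finset.univ.filter (fun u => G.Adj b0 u ∧ u ∉ C) with hD
  have hDprop : ∀ u ∈ D, G.Adj b0 u ∧ u ∈ X ∧ u ∉ C := by
    intro u hu
    rw [hD, Finset.mem_filter] at hu
    refine ⟨hu.2.1, ?_, hu.2.2⟩
    have := oneside hX hXc hu.2.1
    tauto
  obtain ⟨w⟩ := SimpleGraph.ConnectedComponent.exact (hb0c.trans ha0c.symm)
  set p := w.bypass with hp
  have hpath : p.IsPath := SimpleGraph.Walk.bypass_isPath w
  have hlen := path_len hC p hpath
  rw [if_pos hb0C] at hlen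
  have hsupC : (p.support.toFinset.filter (· ∈ C)) ⊆
      C.filter (fun z => G.connectedComponentMk z = c) := by
    intro z hz
    rw [Finset.mem_filter] at hz ⊢
    refine ⟨hz.2, ?_⟩
    have hzs : z ∈ p.support := List.mem_toFinset.mp hz.1
    exact (SimpleGraph.ConnectedComponent.sound (reach_mem p z hzs)).symm.trans hb0c
  have hlen2 : p.length ≤ 2 * kc := by
    have := Finset.card_le_card hsupC
    omega
  have hodd : ¬ Even p.length := by
    rw [walk_parity hX hXc p]
    intro hiff
    exact hb0X (hiff.mpr ha0X)
  obtain ⟨m, hm⟩ := Nat.not_even_iff_odd.mp hodd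
  have hcard : r + (r - 2) * m ≤ D.card := by
    refine le_trans ?_ hb0big
    have hm1' : m + 1 ≤ kc := by omega
    have e1 : (r - 1) * kc = (r - 2) * kc + kc := by
      have h' : r - 1 = (r - 2) + 1 := by omega
      rw [h', Nat.add_mul, Nat.one_mul]
    have e2 : (r - 2) * m ≤ (r - 2) * (kc - 1) := Nat.mul_le_mul_left _ (by omega)
    have e3 : (r - 2) * (kc - 1) + (r - 2) = (r - 2) * kc := by
      rw [← Nat.mul_succ]
      congr 1
      omega
    omega
  exact walk_ind hr hX hXc hC hfree ha0X ha0C hy1adj hy1C m b0 D hb0X hDprop hcard p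
    (by omega)

end AuxiliaryLemmas


theorem stmt_2 {V : Type*} [Fintype V] (G : SimpleGraph V) (r : ℕ)
    (hr : 2 ≤ r) (hbip : IsBip G) (hfree : HFree (starSubdiv r) G) :
    ivc G ≤ (r - 1) * (vc G) ^ 2 := by
  classical
  obtain ⟨X, hX, hXc⟩ := hbip
  have hvc_mem : vc G ∈ {n | ∃ S : Finset V, IsVC G S ∧ S.card = n} := by
    apply Nat.sInf_mem
    exact ⟨Finset.univ.card, Finset.univ, fun u v h => Or.inl (Finset.mem_univ u), rfl⟩
  obtain ⟨C, hC, hCcard⟩ := hvc_mem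
  set kc : G.ConnectedComponent → ℕ :=
    fun c => (C.filter (fun z => G.connectedComponentMk z = c)).card with hkc
  set P : G.ConnectedComponent → Prop := fun c =>
    (Finset.univ.filter (fun v : V => v ∈ X ∧ G.connectedComponentMk v = c)).card ≤
      (r - 1) * kc c ^ 2 with hP
  set T : Finset V := Finset.univ.filter
    (fun v => (∃ z, G.Adj v z) ∧ (v ∈ X ↔ P (G.connectedComponentMk v))) with hT
  have hTcov : IsVC G T := by
    intro u v h
    have hcc : G.connectedComponentMk u = G.connectedComponentMk v :=
      SimpleGraph.ConnectedComponent.sound h.reachable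
    have h1 := oneside hX hXc h
    by_cases hP1 : P (G.connectedComponentMk u)
    · by_cases hu : u ∈ X
      · left
        rw [hT, Finset.mem_filter]
        exact ⟨Finset.mem_univ _, ⟨v, h⟩, by tauto⟩
      · right
        rw [hT, Finset.mem_filter]
        refine ⟨Finset.mem_univ _, ⟨u, h.symm⟩, ?_⟩
        rw [← hcc]
        tauto
    · by_cases hu : u ∈ X
      · right
        rw [hT, Finset.mem_filter]
        refine ⟨Finset.mem_univ _, ⟨u, h.symm⟩, ?_⟩
        rw [← hcc]
        tauto
      · left
        rw [hT, Finset.mem_filter]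
        exact ⟨Finset.mem_univ _, ⟨v, h⟩, by tauto⟩
  have hTind : IsIS G (↑T) := by
    intro u hu v hv hne hadj
    rw [Finset.mem_coe, hT, Finset.mem_filter] at hu hv
    have hcc : G.connectedComponentMk u = G.connectedComponentMk v :=
      SimpleGraph.ConnectedComponent.sound hadj.reachable
    have hu2 := hu.2.2
    have hv2 := hv.2.2
    rw [hcc] at hu2
    by_cases hu1 : u ∈ X
    · exact hX hu1 (hv2.mpr (hu2.mp hu1)) hne hadj
    · have hv1 : v ∉ X := fun hv1 => hu1 (hu2.mpr (hv2.mp hv1))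
      exact hXc hu1 hv1 hne hadj
  have h_ivc : ivc G ≤ T.card := Nat.sInf_le ⟨T, hTcov, hTind, rfl⟩
  set CS := Finset.univ.image (fun v : V => G.connectedComponentMk v) with hCS
  have hTsum : T.card = ∑ c ∈ CS, (T.filter (fun v => G.connectedComponentMk v = c)).card :=
    Finset.card_eq_sum_card_fiberwise
      (fun x _ => Finset.mem_image_of_mem _ (Finset.mem_univ x))
  have hCsum : C.card = ∑ c ∈ CS, kc c :=
    Finset.card_eq_sum_card_fiberwise
      (fun x _ => Finset.mem_image_of_mem _ (Finset.mem_univ x))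
  have hfiber : ∀ c, (T.filter (fun v => G.connectedComponentMk v = c)).card ≤
      (r - 1) * kc c ^ 2 := by
    intro c
    by_cases hedge : ∃ u z, G.Adj u z ∧ G.connectedComponentMk u = c
    · by_cases hPc : P c
      · refine le_trans (Finset.card_le_card ?_) hPc
        intro v hv
        rw [Finset.mem_filter] at hv
        obtain ⟨hvT, hvc⟩ := hv
        rw [hT, Finset.mem_filter] at hvT
        rw [Finset.mem_filter]
        have := hvT.2.2
        rw [hvc] at this
        exact ⟨Finset.mem_univ _, this.mpr hPc, hvc⟩
      · rcases keyLemma hr hX hXc hC hfree c hedge with hgood | hgood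
        · exact absurd hgood hPc
        · refine le_trans (Finset.card_le_card ?_) hgood
          intro v hv
          rw [Finset.mem_filter] at hv
          obtain ⟨hvT, hvc⟩ := hv
          rw [hT, Finset.mem_filter] at hvT
          rw [Finset.mem_filter]
          have := hvT.2.2
          rw [hvc] at this
          exact ⟨Finset.mem_univ _, fun hvX => hPc (this.mp hvX), hvc⟩
    · have hemp : T.filter (fun v => G.connectedComponentMk v = c) = ∅ := by
        rw [Finset.eq_empty_iff_forall_notMem]
        intro v hv
        rw [Finset.mem_filter] at hv
        obtain ⟨hvT, hvc⟩ := hv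
        rw [hT, Finset.mem_filter] at hvT
        obtain ⟨z, hz⟩ := hvT.2.1
        exact hedge ⟨v, z, hz, hvc⟩
      rw [hemp]
      simp
  calc ivc G ≤ T.card := h_ivc
    _ ≤ ∑ c ∈ CS, (r - 1) * kc c ^ 2 := by
        rw [hTsum]
        exact Finset.sum_le_sum (fun c _ => hfiber c)
    _ = (r - 1) * ∑ c ∈ CS, kc c ^ 2 := by rw [Finset.mul_sum]
    _ ≤ (r - 1) * (∑ c ∈ CS, kc c) ^ 2 := Nat.mul_le_mul_left _ (sum_sq_le _ _)
    _ = (r - 1) * (vc G) ^ 2 := by rw [← hCsum, hCcard]
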